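/- Let v > 0 and let μ be the centered Gaussian measure on ℝ with mean 0 and variance v. Let n_br ≥ 1, let h, s : Fin n_br → ℝ with hᵢ ≠ 0 for all i, and let f₁,…,f_{n_br} : ℝ → ℝ be such that x ↦ fᵢ(hᵢ·x) is in L²(μ) for each i. Define the static parallel Wiener–Hammerstein output y(x) = ∑_{i=1}^{n_br} sᵢ · fᵢ(hᵢ·x) and the branch gains αᵢ = (∫ x·fᵢ(hᵢ·x) dμ(x)) / (hᵢ·v). Then the function a ↦ ∫ (y(x) − a·x)² dμ(x) attains its unique global minimum at a₀ = ∑_{i=1}^{n_br} αᵢ·hᵢ·sᵢ. (This is the static-gain form of Theorem 1: the best linear approximation of a parallel Wiener–Hammerstein system is the sum over branches of αᵢ·Hᵢ·Sᵢ.) -/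

import Mathlib

open MeasureTheory ProbabilityTheory
open scoped NNReal

section AuxWH
open Real Set
open scoped ENNReal


lemma myMulIntegrable {α : Type*} {m : MeasurableSpace α} {μ : Measure α}
    {f g : α → ℝ} (hf : MemLp f 2 μ) (hg : MemLp g 2 μ) :
    Integrable (fun x => f x * g x) μ := by
  have hfg : AEStronglyMeasurable (fun x => f x * g x) μ := hf.1.mul hg.1
  have hint : Integrable (fun x => (f x ^ 2 + g x ^ 2) / 2) μ :=
    (hf.integrable_sq.add hg.integrable_sq).div_const 2
  refine hint.mono' hfg (Filter.Eventually.of_forall fun x => ?_)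
  rw [Real.norm_eq_abs, abs_mul]
  nlinarith [sq_nonneg (|f x| - |g x|), sq_abs (f x), sq_abs (g x), abs_nonneg (f x), abs_nonneg (g x)]

lemma myGaussInt (v : ℝ≥0) (hv : v ≠ 0) (g : ℝ → ℝ) :
    ∫ x, g x ∂(gaussianReal 0 v) = ∫ x, gaussianPDFReal 0 v x * g x := by
  rw [gaussianReal_of_var_ne_zero 0 hv]
  have h1 : (gaussianPDF 0 v) = fun x => ((Real.toNNReal (gaussianPDFReal 0 v x) : ℝ≥0) : ℝ≥0∞) := rfl
  rw [h1, integral_withDensity_eq_integral_smul (measurable_gaussianPDFReal 0 v).real_toNNReal]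
  refine integral_congr_ae (Filter.Eventually.of_forall fun x => ?_)
  simp [NNReal.smul_def, Real.coe_toNNReal _ (gaussianPDFReal_nonneg 0 v x)]

lemma myIoiInt {b : ℝ} (hb : 0 < b) :
    ∫ x in Ioi (0:ℝ), x ^ 2 * Real.exp (-b * x ^ 2)
      = b ^ (-(3:ℝ)/2) * (1/2) * Real.Gamma (3/2) := by
  have := integral_rpow_mul_exp_neg_mul_rpow (p := 2) (q := 2) (b := b)
    (by norm_num) (by norm_num) hb
  rw [show (-(2+1)/2 : ℝ) = -(3:ℝ)/2 by norm_num, show ((2:ℝ)+1)/2 = 3/2 by norm_num] at this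
  rw [← this]
  refine setIntegral_congr_fun measurableSet_Ioi fun x hx => ?_
  simp [Real.rpow_two]

lemma myFullInt {b : ℝ} (hb : 0 < b) :
    ∫ x : ℝ, x ^ 2 * Real.exp (-b * x ^ 2) = b ^ (-(3:ℝ)/2) * Real.sqrt π / 2 := by
  have hInt : Integrable (fun x : ℝ => x ^ 2 * Real.exp (-b * x ^ 2)) volume := by
    have := integrable_rpow_mul_exp_neg_mul_sq hb (s := 2) (by norm_num)
    simpa [Real.rpow_two] using this
  have hsplit := intervalIntegral.integral_Iic_add_Ioi (b := (0:ℝ)) hInt.integrableOn hInt.integrableOn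
  have hneg : ∫ x in Iic (0:ℝ), x ^ 2 * Real.exp (-b * x ^ 2)
      = ∫ x in Ioi (0:ℝ), x ^ 2 * Real.exp (-b * x ^ 2) := by
    rw [← neg_zero, ← integral_comp_neg_Ioi]
    simp
  have hG : Real.Gamma (3/2) = Real.sqrt π / 2 := by
    rw [show (3/2:ℝ) = 1/2 + 1 by norm_num, Real.Gamma_add_one (by norm_num),
      Real.Gamma_one_half_eq]
    ring
  rw [← hsplit, hneg, myIoiInt hb, hG]
  ring

lemma myPdfEq (v : ℝ≥0) (hv : 0 < v) (x : ℝ) :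
    gaussianPDFReal 0 v x = (Real.sqrt (2 * π * v))⁻¹ * Real.exp (-(2 * (v:ℝ))⁻¹ * x ^ 2) := by
  have hw : (0:ℝ) < v := hv
  rw [gaussianPDFReal]
  congr 1
  congr 1
  field_simp
  ring

lemma myIntegrableSq (v : ℝ≥0) (hv : 0 < v) :
    Integrable (fun x : ℝ => x ^ 2) (gaussianReal 0 v) := by
  have hw : (0:ℝ) < v := hv
  have hb : (0:ℝ) < (2 * (v:ℝ))⁻¹ := by positivity
  rw [gaussianReal_of_var_ne_zero 0 hv.ne']
  have h1 : (gaussianPDF 0 v) = fun x => ((Real.toNNReal (gaussianPDFReal 0 v x) : ℝ≥0) : ℝ≥0∞) := rfl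
  rw [h1, integrable_withDensity_iff_integrable_smul (measurable_gaussianPDFReal 0 v).real_toNNReal]
  have hInt : Integrable (fun x : ℝ => x ^ 2 * Real.exp (-(2 * (v:ℝ))⁻¹ * x ^ 2)) volume := by
    have := integrable_rpow_mul_exp_neg_mul_sq hb (s := 2) (by norm_num)
    simpa [Real.rpow_two] using this
  refine ((hInt.const_mul ((Real.sqrt (2 * π * v))⁻¹)).congr
    (Filter.Eventually.of_forall fun x => ?_))
  simp only [NNReal.smul_def, Real.coe_toNNReal _ (gaussianPDFReal_nonneg 0 v x), smul_eq_mul]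
  rw [myPdfEq v hv]
  ring

lemma myMoment2 (v : ℝ≥0) (hv : 0 < v) :
    ∫ x, x ^ 2 ∂(gaussianReal 0 v) = v := by
  have hw : (0:ℝ) < v := hv
  set b : ℝ := (2 * (v:ℝ))⁻¹ with hbdef
  have hb : (0:ℝ) < b := by positivity
  rw [myGaussInt v hv.ne']
  have h2 : ∫ x : ℝ, gaussianPDFReal 0 v x * x ^ 2
      = (Real.sqrt (2 * π * v))⁻¹ * ∫ x : ℝ, x ^ 2 * Real.exp (-b * x ^ 2) := by
    rw [← integral_const_mul]
    refine integral_congr_ae (Filter.Eventually.of_forall fun x => ?_)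
    simp only [myPdfEq v hv]
    ring
  rw [h2, myFullInt hb]
  -- arithmetic
  have h2w : (0:ℝ) < 2 * (v:ℝ) := by positivity
  have hbp : b ^ (-(3:ℝ)/2) = (2 * (v:ℝ)) * Real.sqrt (2 * (v:ℝ)) := by
    rw [hbdef, Real.inv_rpow h2w.le, show (-(3:ℝ)/2) = -(3/2) by ring,
      Real.rpow_neg h2w.le, inv_inv, show ((3:ℝ)/2) = 1 + 1/2 by norm_num,
      Real.rpow_add h2w, Real.rpow_one, Real.sqrt_eq_rpow]
  have hsq : Real.sqrt (2 * π * (v:ℝ)) = Real.sqrt (2 * (v:ℝ)) * Real.sqrt π := by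
    rw [show 2 * π * (v:ℝ) = 2 * (v:ℝ) * π by ring, Real.sqrt_mul h2w.le]
  rw [hbp, hsq]
  have hs1 : (0:ℝ) < Real.sqrt (2 * (v:ℝ)) := Real.sqrt_pos.mpr h2w
  have hs2 : (0:ℝ) < Real.sqrt π := Real.sqrt_pos.mpr Real.pi_pos
  field_simp

open MeasureTheory ProbabilityTheory Real Set
open scoped NNReal ENNReal

lemma myMemLpId (v : ℝ≥0) (hv : 0 < v) :
    MemLp (fun x : ℝ => x) 2 (gaussianReal 0 v) := by
  refine (memLp_two_iff_integrable_sq measurable_id.aestronglyMeasurable).mpr ?_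
  exact myIntegrableSq v hv

end AuxWH

/-- Static-gain form of Theorem 1: the best linear approximation of a (static) parallel
Wiener–Hammerstein system `y x = ∑ i, s i * f i (h i * x)` under a zero-mean Gaussian
input with variance `v > 0` is `a₀ = ∑ i, α i * h i * s i`, where
`α i = (∫ x * f i (h i * x) ∂μ) / (h i * v)` is the Bussgang gain of branch `i`;
`a₀` is the unique global minimizer of the mean square error. -/
theorem parallel_WH_static_bla (v : ℝ≥0) (hv : 0 < v) (n_br : ℕ) (hn : 1 ≤ n_br)
    (h s : Fin n_br → ℝ) (hh : ∀ i, h i ≠ 0) (f : Fin n_br → ℝ → ℝ)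
    (hf : ∀ i, MemLp (fun x => f i (h i * x)) 2 (gaussianReal 0 v))
    (y : ℝ → ℝ) (hy : ∀ x, y x = ∑ i, s i * f i (h i * x))
    (α : Fin n_br → ℝ)
    (hα : ∀ i, α i = (∫ x, x * f i (h i * x) ∂(gaussianReal 0 v)) / (h i * (v : ℝ)))
    (a₀ : ℝ) (ha₀ : a₀ = ∑ i, α i * h i * s i) :
    ∀ a : ℝ, a ≠ a₀ →
      ∫ x, (y x - a₀ * x) ^ 2 ∂(gaussianReal 0 v) <
        ∫ x, (y x - a * x) ^ 2 ∂(gaussianReal 0 v) := by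
  intro a ha
  set μ := gaussianReal 0 v with hμ
  have hw : (0:ℝ) < v := hv
  have hX : MemLp (fun x : ℝ => x) 2 μ := myMemLpId v hv
  have hyfun : y = fun x => ∑ i, s i * f i (h i * x) := funext hy
  have hy2 : MemLp y 2 μ := by
    rw [hyfun]
    exact memLp_finset_sum Finset.univ (fun i _ => (hf i).const_mul (s i))
  have hxy_int : Integrable (fun x => y x * x) μ := myMulIntegrable hy2 hX
  have hsq : ∀ c : ℝ, Integrable (fun x => (y x - c * x) ^ 2) μ := by
    intro c
    have := (hy2.sub (hX.const_mul c)).integrable_sq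
    refine this.congr (Filter.Eventually.of_forall fun x => ?_)
    simp [Pi.sub_apply]
  have hx2 : Integrable (fun x : ℝ => x ^ 2) μ := myIntegrableSq v hv
  have hmom : ∫ x, x ^ 2 ∂μ = v := myMoment2 v hv
  -- the cross moment
  have hbr : ∀ i, ∫ x, x * f i (h i * x) ∂μ = α i * (h i * (v:ℝ)) := by
    intro i
    rw [hα i, div_mul_cancel₀]
    exact mul_ne_zero (hh i) hw.ne'
  have hbr_int : ∀ i : Fin n_br, Integrable (fun x => x * f i (h i * x)) μ :=
    fun i => myMulIntegrable hX (hf i)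
  have hI : ∫ x, y x * x ∂μ = (v:ℝ) * a₀ := by
    have h1 : ∫ x, y x * x ∂μ = ∫ x, ∑ i, s i * (x * f i (h i * x)) ∂μ := by
      refine integral_congr_ae (Filter.Eventually.of_forall fun x => ?_)
      simp only [hy, Finset.sum_mul]
      exact Finset.sum_congr rfl fun i _ => by ring
    rw [h1, integral_finset_sum _ (fun i _ => (hbr_int i).const_mul (s i))]
    simp_rw [integral_const_mul, hbr]
    rw [ha₀, Finset.mul_sum]
    exact Finset.sum_congr rfl fun i _ => by ring
  have key : ∫ x, (y x - a * x) ^ 2 ∂μ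
      = ∫ x, (y x - a₀ * x) ^ 2 ∂μ + (v:ℝ) * (a - a₀) ^ 2 := by
    have h1 : ∫ x, (y x - a * x) ^ 2 ∂μ
        = ∫ x, ((y x - a₀ * x) ^ 2 + ((2 * (a₀ - a)) * (y x * x)
            + (a ^ 2 - a₀ ^ 2) * x ^ 2)) ∂μ := by
      refine integral_congr_ae (Filter.Eventually.of_forall fun x => ?_)
      simp only []
      ring
    have hg1 : Integrable (fun x => (2 * (a₀ - a)) * (y x * x)) μ := hxy_int.const_mul _
    have hg2 : Integrable (fun x => (a ^ 2 - a₀ ^ 2) * x ^ 2) μ := hx2.const_mul _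
    have hg12 : Integrable (fun x => (2 * (a₀ - a)) * (y x * x)
        + (a ^ 2 - a₀ ^ 2) * x ^ 2) μ := hg1.add hg2
    rw [h1, integral_add (hsq a₀) hg12, integral_add hg1 hg2,
      integral_const_mul, integral_const_mul, hI, hmom]
    ring
  rw [key]
  have hpos : (0:ℝ) < (v:ℝ) * (a - a₀) ^ 2 := by
    have : a - a₀ ≠ 0 := sub_ne_zero.mpr ha
    positivity
  linarith
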